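/- For k between 1 and n and nonzero parameters x_i, y_i, z_0, the identity z_0 x_k ∏_{i=k+1}^n (x_i y_i^{-1}) = u_k holds with v̄_k = 1 and u_k = z_0 x_k ∏_{i=k+1}^n x_i y_i^{-1}; more substantively, g_{k,ℓ}(q_ℓ) := (q_ℓ/(1 - y_k^{-1} q_ℓ)) ∏_{i=1}^{k-1} (1 + x_i^{-1} q_ℓ)/(1 - y_i^{-1} q_ℓ) satisfies g_{k,ℓ}(q_ℓ) = (-1)^{n-k+1} K(z; q_ℓ) · u_k · q_ℓ^{n+1} · f̃_{k,ℓ}(-q_ℓ^{-1}), where K(z;t) = 1/((1 - t z_0) ∏_{i=1}^n (1 - t x_i)(1 - t y_i^{-1})) and f̃_{k,ℓ}(t) = t^{-n}(1 + z_0^{-1} t) ∏_{i=1}^n (1 + x_i^{-1} t) ∏_{i=1}^{k-1}(1 - x_i t) ∏_{i=k+1}^n (1 + y_i t). -/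

import Mathlib

open Finset

private lemma aux_cancel {K : Type*} [Field K]
    (q AL z0 xk XR Dz PxL Dxk PxR XL YR CR Dyk BL : K) (m r2 : ℕ)
    (hq : q ≠ 0) (hz0 : z0 ≠ 0) (hxk : xk ≠ 0) (hXR : XR ≠ 0) (hDz : Dz ≠ 0)
    (hPxL : PxL ≠ 0) (hDxk : Dxk ≠ 0) (hPxR : PxR ≠ 0) (hXL : XL ≠ 0)
    (hYR : YR ≠ 0) (hCR : CR ≠ 0) (hDyk : Dyk ≠ 0) (hBL : BL ≠ 0) :
    q * AL =
      q ^ 3 * q ^ (m * 2) * q ^ (r2 * 2) * AL * z0 * xk * XR * Dz * PxL * Dxk * PxR * XL * YR *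
        CR * Dyk * BL * q⁻¹ ^ 2 * q⁻¹ ^ (m * 2) * q⁻¹ ^ (r2 * 2) * z0⁻¹ * xk⁻¹ * XR⁻¹ * Dz⁻¹ *
        PxL⁻¹ * Dxk⁻¹ * PxR⁻¹ * XL⁻¹ * YR⁻¹ * CR⁻¹ * Dyk⁻¹ * BL⁻¹ := by
  have hcan : ∀ s : ℕ, q ^ s * q⁻¹ ^ s = 1 := fun s => by
    rw [← mul_pow, mul_inv_cancel₀ hq, one_pow]
  calc q * AL = (q ^ 3 * q⁻¹ ^ 2) * (q ^ (m*2) * q⁻¹ ^ (m*2)) * (q ^ (r2*2) * q⁻¹ ^ (r2*2))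
        * (z0 * z0⁻¹) * (xk * xk⁻¹) * (XR * XR⁻¹) * (Dz * Dz⁻¹) * (PxL * PxL⁻¹) * (Dxk * Dxk⁻¹)
        * (PxR * PxR⁻¹) * (XL * XL⁻¹) * (YR * YR⁻¹) * (CR * CR⁻¹) * (Dyk * Dyk⁻¹) * (BL * BL⁻¹)
        * AL := by
        rw [hcan, hcan, mul_inv_cancel₀ hz0, mul_inv_cancel₀ hxk, mul_inv_cancel₀ hXR,
          mul_inv_cancel₀ hDz, mul_inv_cancel₀ hPxL, mul_inv_cancel₀ hDxk, mul_inv_cancel₀ hPxR,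
          mul_inv_cancel₀ hXL, mul_inv_cancel₀ hYR, mul_inv_cancel₀ hCR, mul_inv_cancel₀ hDyk,
          mul_inv_cancel₀ hBL]
        have h3 : q ^ 3 * q⁻¹ ^ 2 = q := by field_simp
        rw [h3]; ring
    _ = _ := by ring

set_option maxHeartbeats 1600000 in
/-- With `u_k = z₀ x_k ∏_{i=k+1}^n x_i y_i⁻¹` (and `v̄_k = 1`), the identity
`g_{k,ℓ}(q) = (-1)^{n-k+1} K(z;q) · u_k · q^{n+1} · f̃_{k,ℓ}(-q⁻¹)` holds.
Indices are 0-indexed: `k : Fin n` has 1-indexed value `k+1`, so the sign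
`(-1)^{n-k+1}` becomes `(-1)^{n-k}` with the 0-indexed `k`, `∏_{i=1}^{k-1}` is over
`i < k` and `∏_{i=k+1}^n` over `k < i`.  The hypotheses make all denominators nonzero. -/
theorem g_eq_sign_K_u_ftilde {K : Type*} [Field K] {n : ℕ} (hn : 1 ≤ n)
    (x y : Fin n → K) (z0 q : K) (k : Fin n)
    (hx : ∀ i, x i ≠ 0) (hy : ∀ i, y i ≠ 0) (hz0 : z0 ≠ 0) (hqne : q ≠ 0)
    (hxq : ∀ i, 1 - x i * q ≠ 0) (hyq : ∀ i, 1 - (y i)⁻¹ * q ≠ 0)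
    (hzq : 1 - z0 * q ≠ 0) :
    let u : K := z0 * x k * ∏ i ∈ Finset.univ.filter (fun i => k < i), (x i * (y i)⁻¹)
    let Kq : K := ((1 - q * z0) * ∏ i : Fin n, ((1 - q * x i) * (1 - q * (y i)⁻¹)))⁻¹
    let ftilde : K → K := fun t =>
      t⁻¹ ^ n * (1 + z0⁻¹ * t) * (∏ i : Fin n, (1 + (x i)⁻¹ * t)) *
        (∏ i ∈ Finset.univ.filter (fun i => i < k), (1 - x i * t)) *
        (∏ i ∈ Finset.univ.filter (fun i => k < i), (1 + y i * t))
    q / (1 - (y k)⁻¹ * q) *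
        (∏ i ∈ Finset.univ.filter (fun i => i < k), ((1 + (x i)⁻¹ * q) / (1 - (y i)⁻¹ * q))) =
      (-1 : K) ^ (n - (k : ℕ)) * Kq * u * q ^ (n + 1) * ftilde (-q⁻¹) := by
  intro u Kq ftilde
  unfold u Kq ftilde
  have hfl : Finset.univ.filter (fun i => i < k) = Finset.Iio k := by ext i; simp
  have hfg : Finset.univ.filter (fun i => k < i) = Finset.Ioi k := by ext i; simp
  rw [hfl, hfg]
  -- splitting lemma
  have hsplit : ∀ f : Fin n → K,
      ∏ i, f i = (∏ i ∈ Finset.Iio k, f i) * f k * (∏ i ∈ Finset.Ioi k, f i) := by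
    intro f
    have h1 : (Finset.univ : Finset (Fin n)) = Finset.Iio k ∪ Finset.Ici k := by
      ext i; simp [lt_or_ge]
    have h2 : Disjoint (Finset.Iio k) (Finset.Ici k) := by
      simp [Finset.disjoint_left]
    rw [h1, Finset.prod_union h2, ← Finset.Ioi_insert,
      Finset.prod_insert (by simp), mul_assoc]
  -- per-factor rewrites
  have hz' : (1 + z0⁻¹ * -q⁻¹) = -(z0⁻¹ * q⁻¹) * (1 - q * z0) := by
    field_simp; try ring
  have hXall : (∏ i, (1 + (x i)⁻¹ * -q⁻¹))
      = (-q⁻¹) ^ n * (∏ i, x i)⁻¹ * ∏ i, (1 - q * x i) := by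
    have h : ∏ i, (1 + (x i)⁻¹ * -q⁻¹) = ∏ i, ((-q⁻¹) * (x i)⁻¹ * (1 - q * x i)) :=
      Finset.prod_congr rfl fun i _ => by field_simp [hx i]; try ring
    rw [h, Finset.prod_mul_distrib, Finset.prod_mul_distrib, Finset.prod_const,
      Finset.prod_inv_distrib, Finset.card_univ, Fintype.card_fin]
  have hIio : (∏ i ∈ Finset.Iio k, (1 - x i * -q⁻¹))
      = (q⁻¹) ^ (k : ℕ) * (∏ i ∈ Finset.Iio k, x i)
        * ∏ i ∈ Finset.Iio k, (1 + (x i)⁻¹ * q) := by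
    have h : ∏ i ∈ Finset.Iio k, (1 - x i * -q⁻¹)
        = ∏ i ∈ Finset.Iio k, (q⁻¹ * x i * (1 + (x i)⁻¹ * q)) :=
      Finset.prod_congr rfl fun i _ => by field_simp [hx i]; try ring
    rw [h, Finset.prod_mul_distrib, Finset.prod_mul_distrib, Finset.prod_const,
      Fin.card_Iio]
  have hIoi : (∏ i ∈ Finset.Ioi k, (1 + y i * -q⁻¹))
      = (-q⁻¹) ^ (n - 1 - (k : ℕ)) * (∏ i ∈ Finset.Ioi k, y i)
        * ∏ i ∈ Finset.Ioi k, (1 - (y i)⁻¹ * q) := by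
    have h : ∏ i ∈ Finset.Ioi k, (1 + y i * -q⁻¹)
        = ∏ i ∈ Finset.Ioi k, ((-q⁻¹) * y i * (1 - (y i)⁻¹ * q)) :=
      Finset.prod_congr rfl fun i _ => by field_simp [hy i]; try ring
    rw [h, Finset.prod_mul_distrib, Finset.prod_mul_distrib, Finset.prod_const,
      Fin.card_Ioi]
  have hu : (∏ i ∈ Finset.Ioi k, (x i * (y i)⁻¹))
      = (∏ i ∈ Finset.Ioi k, x i) * (∏ i ∈ Finset.Ioi k, y i)⁻¹ := by
    rw [Finset.prod_mul_distrib, Finset.prod_inv_distrib]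
  have hKq : (∏ i : Fin n, ((1 - q * x i) * (1 - q * (y i)⁻¹)))
      = (∏ i, (1 - q * x i)) * ∏ i, (1 - (y i)⁻¹ * q) := by
    rw [← Finset.prod_mul_distrib]
    exact Finset.prod_congr rfl fun i _ => by ring
  rw [hz', hXall, hIio, hIoi, hu, hKq, Finset.prod_div_distrib,
    hsplit (fun i => x i), hsplit (fun i => 1 - q * x i),
    hsplit (fun i => 1 - (y i)⁻¹ * q)]
  -- notation for atoms
  set AL := ∏ i ∈ Finset.Iio k, (1 + (x i)⁻¹ * q) with hAL
  set BL := ∏ i ∈ Finset.Iio k, (1 - (y i)⁻¹ * q) with hBL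
  set CR := ∏ i ∈ Finset.Ioi k, (1 - (y i)⁻¹ * q) with hCR
  set XL := ∏ i ∈ Finset.Iio k, x i with hXL
  set XR := ∏ i ∈ Finset.Ioi k, x i with hXR
  set YR := ∏ i ∈ Finset.Ioi k, y i with hYR
  set PxL := ∏ i ∈ Finset.Iio k, (1 - q * x i) with hPxL
  set PxR := ∏ i ∈ Finset.Ioi k, (1 - q * x i) with hPxR
  set Dz := 1 - q * z0 with hDz
  set Dxk := 1 - q * x k with hDxk
  set Dyk := 1 - (y k)⁻¹ * q with hDyk
  -- nonzero facts
  have hxq' : ∀ i, (1 : K) - q * x i ≠ 0 := fun i => by rw [mul_comm]; exact hxq i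
  have hBL0 : BL ≠ 0 := Finset.prod_ne_zero_iff.mpr fun i _ => hyq i
  have hCR0 : CR ≠ 0 := Finset.prod_ne_zero_iff.mpr fun i _ => hyq i
  have hXL0 : XL ≠ 0 := Finset.prod_ne_zero_iff.mpr fun i _ => hx i
  have hXR0 : XR ≠ 0 := Finset.prod_ne_zero_iff.mpr fun i _ => hx i
  have hYR0 : YR ≠ 0 := Finset.prod_ne_zero_iff.mpr fun i _ => hy i
  have hPxL0 : PxL ≠ 0 := Finset.prod_ne_zero_iff.mpr fun i _ => hxq' i
  have hPxR0 : PxR ≠ 0 := Finset.prod_ne_zero_iff.mpr fun i _ => hxq' i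
  have hzq' : Dz ≠ 0 := by rw [hDz, mul_comm]; exact hzq
  have hDk : Dyk ≠ 0 := by rw [hDyk]; exact hyq k
  have hPxk : Dxk ≠ 0 := by rw [hDxk]; exact hxq' k
  have hxk : x k ≠ 0 := hx k
  have hyk : y k ≠ 0 := hy k
  clear_value AL BL CR XL XR YR PxL PxR Dz Dxk Dyk
  -- exponent bookkeeping
  have hk : (k : ℕ) < n := k.isLt
  obtain ⟨r, hr⟩ : ∃ r, n = (k : ℕ) + 1 + r := ⟨n - (k : ℕ) - 1, by omega⟩
  have e1 : n - (k : ℕ) = r + 1 := by omega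
  have e2 : n - 1 - (k : ℕ) = r := by omega
  have hneg : ((-q⁻¹ : K))⁻¹ = -q := by rw [inv_neg, inv_inv]
  have pq1 : (-q : K) ^ n = (-1 : K) ^ ((k : ℕ) + 1 + r) * q ^ ((k : ℕ) + 1 + r) := by
    rw [← neg_pow]; exact congrArg (fun m => (-q : K) ^ m) hr
  have pq2 : (q : K) ^ (n + 1) = q ^ ((k : ℕ) + 1 + r + 1) :=
    congrArg (fun m => (q : K) ^ m) (by omega)
  have pq3 : (-q⁻¹ : K) ^ n = (-1 : K) ^ ((k : ℕ) + 1 + r) * (q⁻¹) ^ ((k : ℕ) + 1 + r) := by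
    rw [← neg_pow]; exact congrArg (fun m => (-q⁻¹ : K) ^ m) hr
  have pq4 : (-q⁻¹ : K) ^ r = (-1 : K) ^ r * (q⁻¹) ^ r := by rw [← neg_pow]
  rw [e1, e2, hneg, pq1, pq2, pq3, pq4]
  have hcan : ∀ s : ℕ, q ^ s * q⁻¹ ^ s = 1 := fun s => by
    rw [← mul_pow, mul_inv_cancel₀ hqne, one_pow]
  simp only [mul_inv, inv_pow]
  rcases Nat.even_or_odd r with h1 | h1 <;>
    rcases Nat.even_or_odd ((k : ℕ) + 1 + r) with h2 | h2 <;>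
    rw [h1.neg_one_pow, h2.neg_one_pow, (h1.add_one).neg_one_pow] <;>
    field_simp [hBL0, hCR0, hXL0, hXR0, hYR0, hPxL0, hPxR0, hzq', hDk, hPxk, hxk,
      hyk, hz0, hqne, hcan] <;>
    ring
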